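/- arXiv:2308.08751 — 2 statements merged into one kernel-verified Lean document; each statement's English description precedes it below -/
import Mathlib

section
/- Let Ĉ ∈ S^d₊, let Γ̂ ∈ ℝ^{k×k} be symmetric, let M ∈ ℝ^{d×k} be arbitrary, let H ∈ ℝ^{k×d}, let Γ ∈ S^k₊₊, and set O = 𝒦(Ĉ)(Γ̂ − Γ)𝒦(Ĉ)ᵀ + (I − 𝒦(Ĉ)H) M 𝒦(Ĉ)ᵀ + 𝒦(Ĉ) Mᵀ (I − Hᵀ𝒦(Ĉ)ᵀ). Then Tr(O) ≤ |H|² |Γ̂ − Γ| |Γ⁻¹|² |Ĉ| Tr(Ĉ) + 2(1 + |Ĉ| |H|² |Γ⁻¹|) |Γ⁻¹| |M| |H| Tr(Ĉ). -/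
open MeasureTheory ProbabilityTheory Matrix
open scoped BigOperators

noncomputable section

/-- Euclidean norm of a vector `x ∈ ℝ^d`. -/
def vecNorm {d : ℕ} (x : Fin d → ℝ) : ℝ := Real.sqrt (∑ i, x i ^ 2)

/-- Operator (spectral) norm of a matrix, viewed as a linear map between Euclidean spaces. -/
def opNorm {m n : ℕ} (M : Matrix (Fin m) (Fin n) ℝ) : ℝ :=
  ‖LinearMap.toContinuousLinearMap (Matrix.toEuclideanLin M)‖

/-- Effective dimension `r₂(Q) = Tr(Q)/|Q|`. -/
def effDim {d : ℕ} (Q : Matrix (Fin d) (Fin d) ℝ) : ℝ := Q.trace / opNorm Q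

/-- `L^q` norm `(E |X|^q)^{1/q}` of a real random variable. -/
def LqNorm {Ω : Type*} [MeasurableSpace Ω] (P : Measure Ω) (q : ℝ) (X : Ω → ℝ) : ℝ :=
  (∫ ω, |X ω| ^ q ∂P) ^ (1 / q)

/-- A random vector `X` is Gaussian with mean `m` and covariance `S`:
every linear functional of it is a real Gaussian with the corresponding parameters. -/
def IsGaussianVec {Ω : Type*} [MeasurableSpace Ω] {d : ℕ} (P : Measure Ω)
    (X : Ω → Fin d → ℝ) (m : Fin d → ℝ) (S : Matrix (Fin d) (Fin d) ℝ) : Prop :=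
  ∀ v : Fin d → ℝ,
    P.map (fun ω => v ⬝ᵥ X ω)
      = gaussianReal (v ⬝ᵥ m) (Real.toNNReal (v ⬝ᵥ S.mulVec v))

/-- Sample mean of an ensemble of vectors. -/
def sampleMean {N d : ℕ} (v : Fin N → Fin d → ℝ) : Fin d → ℝ := (N : ℝ)⁻¹ • ∑ n, v n

/-- `1/(N-1)`-normalized sample covariance of an ensemble of vectors. -/
def sampleCov {N d : ℕ} (v : Fin N → Fin d → ℝ) : Matrix (Fin d) (Fin d) ℝ :=
  ((N : ℝ) - 1)⁻¹ • ∑ n, vecMulVec (v n - sampleMean v) (v n - sampleMean v)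

/-- `1/(N-1)`-normalized sample cross-covariance of two ensembles of vectors. -/
def sampleCrossCov {N d k : ℕ} (v : Fin N → Fin d → ℝ) (w : Fin N → Fin k → ℝ) :
    Matrix (Fin d) (Fin k) ℝ :=
  ((N : ℝ) - 1)⁻¹ • ∑ n, vecMulVec (v n - sampleMean v) (w n - sampleMean w)

/-- Kalman gain operator `𝒦(C) = C Hᵀ (H C Hᵀ + Γ)⁻¹`. -/
def kGain {d k : ℕ} (H : Matrix (Fin k) (Fin d) ℝ) (Γ : Matrix (Fin k) (Fin k) ℝ)
    (C : Matrix (Fin d) (Fin d) ℝ) : Matrix (Fin d) (Fin k) ℝ :=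
  C * Hᵀ * (H * C * Hᵀ + Γ)⁻¹

/-- Mean-update operator `ℳ(m, C; y) = m + 𝒦(C)(y − Hm)`. -/
def meanUpdate {d k : ℕ} (H : Matrix (Fin k) (Fin d) ℝ) (Γ : Matrix (Fin k) (Fin k) ℝ)
    (m : Fin d → ℝ) (C : Matrix (Fin d) (Fin d) ℝ) (y : Fin k → ℝ) : Fin d → ℝ :=
  m + (kGain H Γ C).mulVec (y - H.mulVec m)

/-- Covariance-update operator `𝒞(C) = (I − 𝒦(C)H)C`. -/
def covUpdate {d k : ℕ} (H : Matrix (Fin k) (Fin d) ℝ) (Γ : Matrix (Fin k) (Fin k) ℝ)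
    (C : Matrix (Fin d) (Fin d) ℝ) : Matrix (Fin d) (Fin d) ℝ :=
  (1 - kGain H Γ C * H) * C

/-- Kalman filter: `(KF ... j).1` is the analysis mean `μ⁽ʲ⁾` and `(KF ... j).2` the
analysis covariance `Σ⁽ʲ⁾`. -/
def KF {d k : ℕ} (A : Matrix (Fin d) (Fin d) ℝ) (H : Matrix (Fin k) (Fin d) ℝ)
    (Ξ : Matrix (Fin d) (Fin d) ℝ) (Γ : Matrix (Fin k) (Fin k) ℝ)
    (μ0 : Fin d → ℝ) (S0 : Matrix (Fin d) (Fin d) ℝ) (y : ℕ → Fin k → ℝ) :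
    ℕ → (Fin d → ℝ) × Matrix (Fin d) (Fin d) ℝ
  | 0 => (μ0, S0)
  | j + 1 =>
      let prev := KF A H Ξ Γ μ0 S0 y j
      let m := A.mulVec prev.1
      let C := A * prev.2 * Aᵀ + Ξ
      (meanUpdate H Γ m C (y (j + 1)), covUpdate H Γ C)

-- Positive-semidefinite square root (junk value `0` off the psd matrices).
open Classical in
def matSqrt {d : ℕ} (S : Matrix (Fin d) (Fin d) ℝ) : Matrix (Fin d) (Fin d) ℝ :=
  if h : S.PosSemidef then
    h.1.eigenvectorUnitary.1 * diagonal ((↑) ∘ (√·) ∘ h.1.eigenvalues) *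
      (star h.1.eigenvectorUnitary : Matrix (Fin d) (Fin d) ℝ)
  else 0

/-- The stochastic (perturbed-observation) REnKF, driven by the noise arrays
`Z` (resampling, standard Gaussian), `ξ` (dynamics noise) and `η` (observation noise):
`(REnKF ... j ω).1 = μ̂⁽ʲ⁾(ω)` and `(REnKF ... j ω).2 = Σ̂⁽ʲ⁾(ω)`.
The resampled ensemble at time `j` is `μ̂⁽ʲ⁾ + Σ̂⁽ʲ⁾^{1/2} Z⁽ʲ⁺¹⁾ₙ`, which realizes
i.i.d. `N(μ̂⁽ʲ⁾, Σ̂⁽ʲ⁾)` draws conditionally on the past. -/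
def REnKF {Ω : Type*} {d k N : ℕ} (A : Matrix (Fin d) (Fin d) ℝ) (H : Matrix (Fin k) (Fin d) ℝ)
    (Γ : Matrix (Fin k) (Fin k) ℝ) (μ0 : Fin d → ℝ) (S0 : Matrix (Fin d) (Fin d) ℝ)
    (y : ℕ → Fin k → ℝ)
    (Z ξ : ℕ → Fin N → Ω → Fin d → ℝ) (η : ℕ → Fin N → Ω → Fin k → ℝ) :
    ℕ → Ω → (Fin d → ℝ) × Matrix (Fin d) (Fin d) ℝ
  | 0 => fun _ => (μ0, S0)
  | j + 1 => fun ω =>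
      let prev := REnKF A H Γ μ0 S0 y Z ξ η j ω
      let uhat : Fin N → Fin d → ℝ :=
        fun n => A.mulVec (prev.1 + (matSqrt prev.2).mulVec (Z (j + 1) n ω)) + ξ (j + 1) n ω
      let K := kGain H Γ (sampleCov uhat)
      let u' : Fin N → Fin d → ℝ :=
        fun n => (1 - K * H).mulVec (uhat n) + K.mulVec (y (j + 1) + η (j + 1) n ω)
      (sampleMean u', sampleCov u')

/-- Index type for the three mutually independent noise arrays. -/
def NoiseType (d k N : ℕ) : (ℕ × Fin N) ⊕ ((ℕ × Fin N) ⊕ (ℕ × Fin N)) → Type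
  | Sum.inl _ => Fin d → ℝ
  | Sum.inr (Sum.inl _) => Fin d → ℝ
  | Sum.inr (Sum.inr _) => Fin k → ℝ

def noiseσ (d k N : ℕ) : ∀ i, MeasurableSpace (NoiseType d k N i)
  | Sum.inl _ => (inferInstance : MeasurableSpace (Fin d → ℝ))
  | Sum.inr (Sum.inl _) => (inferInstance : MeasurableSpace (Fin d → ℝ))
  | Sum.inr (Sum.inr _) => (inferInstance : MeasurableSpace (Fin k → ℝ))

/-- The three noise arrays, bundled as a single indexed family of random variables. -/
def noiseFun {Ω : Type*} {d k N : ℕ} (Z ξ : ℕ → Fin N → Ω → Fin d → ℝ)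
    (η : ℕ → Fin N → Ω → Fin k → ℝ) : ∀ i, Ω → NoiseType d k N i
  | Sum.inl p => Z p.1 p.2
  | Sum.inr (Sum.inl p) => ξ p.1 p.2
  | Sum.inr (Sum.inr p) => η p.1 p.2


namespace OffsetAux
open scoped Matrix.Norms.L2Operator
open scoped MatrixOrder

variable {m n p d k : ℕ}

lemma opNorm_eq (M : Matrix (Fin m) (Fin n) ℝ) : opNorm M = ‖M‖ := rfl

lemma transpose_eq_conjT (M : Matrix (Fin m) (Fin n) ℝ) : Mᵀ = Mᴴ := by
  ext i j; simp [Matrix.conjTranspose_apply]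

lemma opNorm_transpose (M : Matrix (Fin m) (Fin n) ℝ) : ‖Mᵀ‖ = ‖M‖ := by
  rw [transpose_eq_conjT]; exact Matrix.l2_opNorm_conjTranspose M

lemma opNorm_one_le : ‖(1 : Matrix (Fin d) (Fin d) ℝ)‖ ≤ 1 := by
  rw [Matrix.l2_opNorm_def]
  have h : (Matrix.toEuclideanLin (𝕜 := ℝ) (m := Fin d) (n := Fin d)).trans
      LinearMap.toContinuousLinearMap (1 : Matrix (Fin d) (Fin d) ℝ)
      = ContinuousLinearMap.id ℝ (EuclideanSpace ℝ (Fin d)) := by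
    ext x
    simp [Matrix.toEuclideanLin_apply]
  rw [h]
  exact ContinuousLinearMap.norm_id_le

lemma mul_le' {a b : ℝ} (A : Matrix (Fin m) (Fin n) ℝ) (B : Matrix (Fin n) (Fin p) ℝ)
    (ha : ‖A‖ ≤ a) (hb : ‖B‖ ≤ b) : ‖A * B‖ ≤ a * b :=
  (Matrix.l2_opNorm_mul A B).trans
    (mul_le_mul ha hb (norm_nonneg _) ((norm_nonneg A).trans ha))

lemma inner_e (x y : Fin n → ℝ) :
    (inner ℝ ((WithLp.equiv 2 (Fin n → ℝ)).symm x) ((WithLp.equiv 2 (Fin n → ℝ)).symm y) : ℝ)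
      = x ⬝ᵥ y := by
  simp [PiLp.inner_apply, dotProduct, RCLike.inner_apply, mul_comm]

lemma norm_e_sq (x : Fin n → ℝ) :
    ‖(WithLp.equiv 2 (Fin n → ℝ)).symm x‖ ^ 2 = x ⬝ᵥ x := by
  rw [← real_inner_self_eq_norm_sq, inner_e]

lemma mulVec_norm_le (M : Matrix (Fin m) (Fin n) ℝ) (x : Fin n → ℝ) :
    ‖(WithLp.equiv 2 (Fin m → ℝ)).symm (M *ᵥ x)‖
      ≤ ‖M‖ * ‖(WithLp.equiv 2 (Fin n → ℝ)).symm x‖ :=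
  M.l2_opNorm_mulVec ((WithLp.equiv 2 (Fin n → ℝ)).symm x)

lemma quad_le (M : Matrix (Fin n) (Fin n) ℝ) (x : Fin n → ℝ) :
    x ⬝ᵥ M *ᵥ x ≤ ‖M‖ * (x ⬝ᵥ x) := by
  have h1 : x ⬝ᵥ M *ᵥ x
      = (inner ℝ ((WithLp.equiv 2 (Fin n → ℝ)).symm x)
          ((WithLp.equiv 2 (Fin n → ℝ)).symm (M *ᵥ x)) : ℝ) := (inner_e _ _).symm
  calc x ⬝ᵥ M *ᵥ x ≤ ‖(WithLp.equiv 2 (Fin n → ℝ)).symm x‖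
        * ‖(WithLp.equiv 2 (Fin n → ℝ)).symm (M *ᵥ x)‖ := h1 ▸ real_inner_le_norm _ _
    _ ≤ ‖(WithLp.equiv 2 (Fin n → ℝ)).symm x‖
        * (‖M‖ * ‖(WithLp.equiv 2 (Fin n → ℝ)).symm x‖) := by
        exact mul_le_mul_of_nonneg_left (mulVec_norm_le M x) (norm_nonneg _)
    _ = ‖M‖ * (x ⬝ᵥ x) := by rw [← norm_e_sq]; ring

lemma trace_eq_sum_quad {C : Matrix (Fin d) (Fin d) ℝ} (hC : C.PosSemidef)
    (B : Matrix (Fin d) (Fin d) ℝ) :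
    (B * C).trace = ∑ i, (fun j => CFC.sqrt C i j) ⬝ᵥ B *ᵥ (fun j => CFC.sqrt C i j) := by
  set R := CFC.sqrt C with hR
  have hsymm : ∀ i j, R j i = R i j := by
    intro i j
    have := (CFC.sqrt_nonneg C).posSemidef.isHermitian
    have h2 : Rᵀ = R := by
      rw [show Rᵀ = Rᴴ by ext a b; simp [Matrix.conjTranspose_apply]]; exact this
    calc R j i = Rᵀ i j := rfl
      _ = R i j := by rw [h2]
  have h1 : (B * C).trace = (R * B * R).trace := by
    rw [← CFC.sqrt_mul_sqrt_self C hC.nonneg, ← Matrix.mul_assoc, Matrix.trace_mul_cycle]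
  rw [h1, Matrix.trace]
  refine Finset.sum_congr rfl fun i _ => ?_
  simp only [Matrix.diag_apply, Matrix.mul_apply, dotProduct, Matrix.mulVec, dotProduct,
    Finset.sum_mul]
  rw [Finset.sum_comm]
  refine Finset.sum_congr rfl fun l _ => ?_
  rw [Finset.mul_sum]
  refine Finset.sum_congr rfl fun j _ => ?_
  rw [hsymm i j]
  ring

lemma trace_nonneg {C : Matrix (Fin d) (Fin d) ℝ} (hC : C.PosSemidef) : 0 ≤ C.trace := by
  have h := trace_eq_sum_quad hC 1
  rw [Matrix.one_mul] at h
  rw [h]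
  refine Finset.sum_nonneg fun i _ => ?_
  simp only [Matrix.one_mulVec]
  exact Finset.sum_nonneg fun j _ => mul_self_nonneg _

lemma trace_mul_le {C : Matrix (Fin d) (Fin d) ℝ} (hC : C.PosSemidef)
    (B : Matrix (Fin d) (Fin d) ℝ) : (B * C).trace ≤ ‖B‖ * C.trace := by
  rw [trace_eq_sum_quad hC B]
  have h1 : C.trace = ∑ i, (fun j => CFC.sqrt C i j) ⬝ᵥ (fun j => CFC.sqrt C i j) := by
    have := trace_eq_sum_quad hC 1
    rw [Matrix.one_mul] at this
    simpa [Matrix.one_mulVec] using this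
  rw [h1, Finset.mul_sum]
  exact Finset.sum_le_sum fun i _ => quad_le B _

lemma quad_sub (R A : Matrix (Fin n) (Fin n) ℝ) (z : Fin n → ℝ) :
    (R *ᵥ z) ⬝ᵥ (A *ᵥ (R *ᵥ z)) = z ⬝ᵥ ((Rᵀ * A * R) *ᵥ z) := by
  rw [Matrix.mulVec_mulVec, Matrix.dotProduct_mulVec, Matrix.dotProduct_mulVec,
    ← Matrix.vecMul_transpose R z]
  simp only [Matrix.vecMul_vecMul, Matrix.mul_assoc]

lemma dot_le_inv_norm_mul_quad {Γ : Matrix (Fin k) (Fin k) ℝ} (hΓ : Γ.PosDef)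
    (z : Fin k → ℝ) : z ⬝ᵥ z ≤ ‖Γ⁻¹‖ * (z ⬝ᵥ Γ *ᵥ z) := by
  set R := CFC.sqrt Γ with hRdef
  have hRR : R * R = Γ := CFC.sqrt_mul_sqrt_self Γ hΓ.posSemidef.nonneg
  have hRsymm : Rᵀ = R := by
    have := (CFC.sqrt_nonneg Γ).posSemidef.isHermitian
    rw [show Rᵀ = Rᴴ by ext a b; simp [Matrix.conjTranspose_apply]]; exact this
  have hdetR : IsUnit R.det := by
    have hdet : R.det * R.det = Γ.det := by rw [← Matrix.det_mul, hRR]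
    have : Γ.det ≠ 0 := hΓ.det_pos.ne'
    exact isUnit_iff_ne_zero.2 fun h => this (by rw [← hdet, h, mul_zero])
  have key : Rᵀ * Γ⁻¹ * R = 1 := by
    rw [hRsymm, ← hRR, Matrix.mul_inv_rev]
    calc R * (R⁻¹ * R⁻¹) * R = (R * R⁻¹) * (R⁻¹ * R) := by noncomm_ring
      _ = 1 := by rw [Matrix.mul_nonsing_inv _ hdetR, Matrix.nonsing_inv_mul _ hdetR, one_mul]
  have h1 : z ⬝ᵥ z = (R *ᵥ z) ⬝ᵥ (Γ⁻¹ *ᵥ (R *ᵥ z)) := by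
    rw [quad_sub, key, Matrix.one_mulVec]
  have h2 : (R *ᵥ z) ⬝ᵥ (R *ᵥ z) = z ⬝ᵥ Γ *ᵥ z := by
    have := quad_sub R 1 z
    rw [Matrix.one_mulVec, Matrix.mul_one, hRsymm, hRR] at this
    exact this
  rw [h1, ← h2]
  exact quad_le Γ⁻¹ (R *ᵥ z)

lemma opNorm_inv_le {Γ P : Matrix (Fin k) (Fin k) ℝ} (hΓ : Γ.PosDef) (hP : P.PosSemidef) :
    ‖(P + Γ)⁻¹‖ ≤ ‖Γ⁻¹‖ := by
  set S := P + Γ with hSdef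
  have hS : S.PosDef := Matrix.PosDef.posSemidef_add hP hΓ
  have hdetS : IsUnit S.det := hS.det_pos.ne'.isUnit
  have hbound : ∀ x : Fin k → ℝ,
      ‖(WithLp.equiv 2 (Fin k → ℝ)).symm x‖
        ≤ ‖Γ⁻¹‖ * ‖(WithLp.equiv 2 (Fin k → ℝ)).symm (S *ᵥ x)‖ := by
    intro x
    set a := ‖(WithLp.equiv 2 (Fin k → ℝ)).symm x‖
    set b := ‖(WithLp.equiv 2 (Fin k → ℝ)).symm (S *ᵥ x)‖
    have ha : (0:ℝ) ≤ a := norm_nonneg _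
    have hb : (0:ℝ) ≤ b := norm_nonneg _
    have hc : (0:ℝ) ≤ ‖Γ⁻¹‖ := norm_nonneg _
    have h1 : x ⬝ᵥ x ≤ ‖Γ⁻¹‖ * (x ⬝ᵥ S *ᵥ x) := by
      have h2 := dot_le_inv_norm_mul_quad hΓ x
      have h3 : x ⬝ᵥ Γ *ᵥ x ≤ x ⬝ᵥ S *ᵥ x := by
        rw [hSdef, Matrix.add_mulVec, dotProduct_add]
        have hPx : 0 ≤ x ⬝ᵥ P *ᵥ x := by simpa using hP.dotProduct_mulVec_nonneg x
        linarith
      nlinarith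
    have h4 : x ⬝ᵥ S *ᵥ x ≤ a * b := by
      have := real_inner_le_norm ((WithLp.equiv 2 (Fin k → ℝ)).symm x)
        ((WithLp.equiv 2 (Fin k → ℝ)).symm (S *ᵥ x))
      rwa [inner_e] at this
    have h5 : a ^ 2 = x ⬝ᵥ x := norm_e_sq x
    rcases eq_or_lt_of_le ha with h | h
    · rw [← h]; positivity
    · nlinarith
  rw [Matrix.l2_opNorm_def]
  refine ContinuousLinearMap.opNorm_le_bound _ (norm_nonneg _) fun y => ?_
  have hy : S *ᵥ (S⁻¹ *ᵥ (WithLp.equiv 2 (Fin k → ℝ)) y) = (WithLp.equiv 2 (Fin k → ℝ)) y := by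
    rw [Matrix.mulVec_mulVec, Matrix.mul_nonsing_inv _ hdetS, Matrix.one_mulVec]
  have := hbound (S⁻¹ *ᵥ (WithLp.equiv 2 (Fin k → ℝ)) y)
  rw [hy] at this
  exact this

end OffsetAux

open OffsetAux
open scoped Matrix.Norms.L2Operator

/-- **Trace of the offset** (Lemma 5.2). -/
theorem offset_trace_bound (d k : ℕ)
    (Chat : Matrix (Fin d) (Fin d) ℝ) (hChat : Chat.PosSemidef)
    (Γhat : Matrix (Fin k) (Fin k) ℝ) (hΓhat : Γhat.IsSymm)
    (M : Matrix (Fin d) (Fin k) ℝ) (H : Matrix (Fin k) (Fin d) ℝ)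
    (Γ : Matrix (Fin k) (Fin k) ℝ) (hΓ : Γ.PosDef) :
    (kGain H Γ Chat * (Γhat - Γ) * (kGain H Γ Chat)ᵀ
      + (1 - kGain H Γ Chat * H) * M * (kGain H Γ Chat)ᵀ
      + kGain H Γ Chat * Mᵀ * (1 - Hᵀ * (kGain H Γ Chat)ᵀ)).trace
    ≤ opNorm H ^ 2 * opNorm (Γhat - Γ) * opNorm Γ⁻¹ ^ 2 * opNorm Chat * Chat.trace
      + 2 * (1 + opNorm Chat * opNorm H ^ 2 * opNorm Γ⁻¹) * opNorm Γ⁻¹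
        * opNorm M * opNorm H * Chat.trace := by
  have hChatT : Chatᵀ = Chat := by
    rw [transpose_eq_conjT]; exact hChat.isHermitian
  have hPsd : (H * Chat * Hᵀ).PosSemidef := by
    rw [transpose_eq_conjT H]; exact hChat.mul_mul_conjTranspose_same H
  set S := H * Chat * Hᵀ + Γ with hSdef
  have hSinv : ‖S⁻¹‖ ≤ ‖Γ⁻¹‖ := opNorm_inv_le hΓ hPsd
  have hSinvT : ‖(S⁻¹)ᵀ‖ ≤ ‖Γ⁻¹‖ := (opNorm_transpose _).trans_le hSinv
  have hTnn : 0 ≤ Chat.trace := trace_nonneg hChat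
  have hK : kGain H Γ Chat = Chat * Hᵀ * S⁻¹ := rfl
  set K := kGain H Γ Chat with hKdef
  have hKT : Kᵀ = (S⁻¹)ᵀ * (H * Chat) := by
    rw [hK]
    simp only [Matrix.transpose_mul, Matrix.transpose_transpose, hChatT, Matrix.mul_assoc]
  have hKnorm : ‖K‖ ≤ ‖Chat‖ * ‖H‖ * ‖Γ⁻¹‖ := by
    rw [hK]
    exact mul_le' _ _ (mul_le' Chat Hᵀ le_rfl (opNorm_transpose H).le) hSinv
  -- Term 1
  set X := Hᵀ * (S⁻¹ * ((Γhat - Γ) * ((S⁻¹)ᵀ * H))) with hXdef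
  have hX : K * (Γhat - Γ) * Kᵀ = Chat * (X * Chat) := by
    rw [hKT, hK, hXdef]
    simp only [Matrix.mul_assoc]
  have hXnorm : ‖X‖ ≤ ‖H‖ * (‖Γ⁻¹‖ * (‖Γhat - Γ‖ * (‖Γ⁻¹‖ * ‖H‖))) :=
    mul_le' _ _ (opNorm_transpose H).le
      (mul_le' _ _ hSinv (mul_le' _ _ le_rfl (mul_le' _ H hSinvT le_rfl)))
  have b1 : (K * (Γhat - Γ) * Kᵀ).trace
      ≤ ‖H‖ * (‖Γ⁻¹‖ * (‖Γhat - Γ‖ * (‖Γ⁻¹‖ * ‖H‖))) * ‖Chat‖ * Chat.trace := by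
    rw [hX, Matrix.trace_mul_comm Chat (X * Chat)]
    exact (trace_mul_le hChat (X * Chat)).trans
      (mul_le_mul_of_nonneg_right (mul_le' X Chat hXnorm le_rfl) hTnn)
  -- Term 2
  set Y := (1 - K * H) * (M * ((S⁻¹)ᵀ * H)) with hYdef
  have hY : (1 - K * H) * M * Kᵀ = Y * Chat := by
    rw [hKT, hYdef]
    simp only [Matrix.mul_assoc]
  have h1KH : ‖1 - K * H‖ ≤ 1 + ‖Chat‖ * ‖H‖ * ‖Γ⁻¹‖ * ‖H‖ := by
    calc ‖1 - K * H‖ ≤ ‖(1 : Matrix (Fin d) (Fin d) ℝ)‖ + ‖K * H‖ := norm_sub_le _ _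
      _ ≤ 1 + ‖Chat‖ * ‖H‖ * ‖Γ⁻¹‖ * ‖H‖ :=
        add_le_add opNorm_one_le (mul_le' K H hKnorm le_rfl)
  have hYnorm : ‖Y‖ ≤ (1 + ‖Chat‖ * ‖H‖ * ‖Γ⁻¹‖ * ‖H‖) * (‖M‖ * (‖Γ⁻¹‖ * ‖H‖)) :=
    mul_le' _ _ h1KH (mul_le' M _ le_rfl (mul_le' _ H hSinvT le_rfl))
  have b2 : ((1 - K * H) * M * Kᵀ).trace
      ≤ (1 + ‖Chat‖ * ‖H‖ * ‖Γ⁻¹‖ * ‖H‖) * (‖M‖ * (‖Γ⁻¹‖ * ‖H‖)) * Chat.trace := by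
    rw [hY]
    exact (trace_mul_le hChat Y).trans (mul_le_mul_of_nonneg_right hYnorm hTnn)
  -- Term 3 equals term 2
  have b3 : (K * Mᵀ * (1 - Hᵀ * Kᵀ)).trace = ((1 - K * H) * M * Kᵀ).trace := by
    have heq : K * Mᵀ * (1 - Hᵀ * Kᵀ) = ((1 - K * H) * M * Kᵀ)ᵀ := by
      simp only [Matrix.transpose_mul, Matrix.transpose_sub, Matrix.transpose_one,
        Matrix.transpose_transpose, Matrix.mul_assoc]
    rw [heq, Matrix.trace_transpose]
  -- Combine
  rw [Matrix.trace_add, Matrix.trace_add, b3]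
  simp only [opNorm_eq]
  have hsum := add_le_add (add_le_add b1 b2) b2
  calc (K * (Γhat - Γ) * Kᵀ).trace + ((1 - K * H) * M * Kᵀ).trace
        + ((1 - K * H) * M * Kᵀ).trace
      ≤ ‖H‖ * (‖Γ⁻¹‖ * (‖Γhat - Γ‖ * (‖Γ⁻¹‖ * ‖H‖))) * ‖Chat‖ * Chat.trace
        + (1 + ‖Chat‖ * ‖H‖ * ‖Γ⁻¹‖ * ‖H‖) * (‖M‖ * (‖Γ⁻¹‖ * ‖H‖)) * Chat.trace
          + (1 + ‖Chat‖ * ‖H‖ * ‖Γ⁻¹‖ * ‖H‖) * (‖M‖ * (‖Γ⁻¹‖ * ‖H‖)) * Chat.trace := hsum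
    _ = ‖H‖ ^ 2 * ‖Γhat - Γ‖ * ‖Γ⁻¹‖ ^ 2 * ‖Chat‖ * Chat.trace
        + 2 * (1 + ‖Chat‖ * ‖H‖ ^ 2 * ‖Γ⁻¹‖) * ‖Γ⁻¹‖ * ‖M‖ * ‖H‖ * Chat.trace := by ring


end
end

section
/- Let Q ∈ S^d₊, Γ ∈ S^k₊₊, and H ∈ ℝ^{k×d}. Then the covariance-update operator 𝒞(Q) = (I − 𝒦(Q)H)Q satisfies 0 ⪯ 𝒞(Q) ⪯ Q in the positive semidefinite order, and consequently |𝒞(Q)| ≤ |Q|. -/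
open MeasureTheory ProbabilityTheory Matrix
open scoped BigOperators

noncomputable section

section AuxNormMono
open scoped Matrix.Norms.L2Operator MatrixOrder

private lemma l2_opNorm_mono_psd {d : ℕ} {A B : Matrix (Fin d) (Fin d) ℝ}
    (hA : A.PosSemidef) (hBA : (B - A).PosSemidef) :
    ‖A‖ ≤ ‖B‖ := by
  set R := CFC.sqrt A with hRdef
  have hR : R.PosSemidef := (CFC.sqrt_nonneg A).posSemidef
  have hRR : R * R = A := CFC.sqrt_mul_sqrt_self A hA.nonneg
  have hRH : Rᴴ = R := hR.1
  have hRT : Rᵀ = R := by rw [← Matrix.conjTranspose_eq_transpose_of_trivial]; exact hRH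
  have hnormA : ‖A‖ = ‖R‖ * ‖R‖ := by
    rw [← hRR]; nth_rewrite 1 [← hRH]; exact Matrix.l2_opNorm_conjTranspose_mul_self R
  have hBnn : (0:ℝ) ≤ ‖B‖ := norm_nonneg _
  have key : ∀ x : EuclideanSpace ℝ (Fin d),
      ‖(Matrix.toEuclideanCLM (𝕜 := ℝ) R) x‖ ≤ Real.sqrt ‖B‖ * ‖x‖ := by
    intro x
    have hx2 : ‖(Matrix.toEuclideanCLM (𝕜 := ℝ) R) x‖ ^ 2 ≤ ‖B‖ * ‖x‖ ^ 2 := by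
      set x' : Fin d → ℝ := WithLp.equiv 2 _ x with hx'
      have e1 : ‖(Matrix.toEuclideanCLM (𝕜 := ℝ) R) x‖ ^ 2
          = (R *ᵥ x') ⬝ᵥ (R *ᵥ x') := by
        rw [← real_inner_self_eq_norm_sq]
        rfl
      have e2 : (R *ᵥ x') ⬝ᵥ (R *ᵥ x') = x' ⬝ᵥ (A *ᵥ x') := by
        rw [← hRR, ← Matrix.mulVec_mulVec, Matrix.dotProduct_mulVec (R *ᵥ x'),
          ← Matrix.mulVec_transpose, hRT, dotProduct_comm]
      have e3 : x' ⬝ᵥ (A *ᵥ x') ≤ x' ⬝ᵥ (B *ᵥ x') := by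
        have := hBA.dotProduct_mulVec_nonneg x'
        simp only [star_trivial, Matrix.sub_mulVec, dotProduct_sub] at this
        linarith
      have e4 : x' ⬝ᵥ (B *ᵥ x') ≤ ‖B‖ * ‖x‖ ^ 2 := by
        have h5 : x' ⬝ᵥ (B *ᵥ x')
            = inner ℝ x ((Matrix.toEuclideanCLM (𝕜 := ℝ) B) x) := by rw [dotProduct_comm]; rfl
        have h6 : inner ℝ x ((Matrix.toEuclideanCLM (𝕜 := ℝ) B) x)
            ≤ ‖x‖ * ‖(Matrix.toEuclideanCLM (𝕜 := ℝ) B) x‖ := real_inner_le_norm _ _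
        have h7 : ‖(Matrix.toEuclideanCLM (𝕜 := ℝ) B) x‖ ≤ ‖B‖ * ‖x‖ :=
          (Matrix.toEuclideanCLM (𝕜 := ℝ) B).le_opNorm x
        nlinarith [norm_nonneg x]
      calc ‖(Matrix.toEuclideanCLM (𝕜 := ℝ) R) x‖ ^ 2 = x' ⬝ᵥ (A *ᵥ x') := by rw [e1, e2]
        _ ≤ x' ⬝ᵥ (B *ᵥ x') := e3
        _ ≤ ‖B‖ * ‖x‖ ^ 2 := e4
    have h8 : ‖(Matrix.toEuclideanCLM (𝕜 := ℝ) R) x‖ ^ 2 ≤ (Real.sqrt ‖B‖ * ‖x‖) ^ 2 := by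
      rw [mul_pow, Real.sq_sqrt hBnn]; exact hx2
    calc ‖(Matrix.toEuclideanCLM (𝕜 := ℝ) R) x‖
        = Real.sqrt (‖(Matrix.toEuclideanCLM (𝕜 := ℝ) R) x‖ ^ 2) :=
          (Real.sqrt_sq (norm_nonneg _)).symm
      _ ≤ Real.sqrt ((Real.sqrt ‖B‖ * ‖x‖) ^ 2) := Real.sqrt_le_sqrt h8
      _ = Real.sqrt ‖B‖ * ‖x‖ :=
          Real.sqrt_sq (mul_nonneg (Real.sqrt_nonneg _) (norm_nonneg _))
  have hRnorm : ‖R‖ ≤ Real.sqrt ‖B‖ := by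
    rw [Matrix.cstar_norm_def]
    exact ContinuousLinearMap.opNorm_le_bound _ (Real.sqrt_nonneg _) key
  calc ‖A‖ = ‖R‖ * ‖R‖ := hnormA
    _ ≤ Real.sqrt ‖B‖ * Real.sqrt ‖B‖ :=
        mul_le_mul hRnorm hRnorm (norm_nonneg _) (Real.sqrt_nonneg _)
    _ = ‖B‖ := Real.mul_self_sqrt hBnn


lemma opNorm_mono_psd {d : ℕ} {A B : Matrix (Fin d) (Fin d) ℝ}
    (hA : A.PosSemidef) (hBA : (B - A).PosSemidef) :
    opNorm A ≤ opNorm B := by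
  have e1 : opNorm A = ‖A‖ := rfl
  have e2 : opNorm B = ‖B‖ := rfl
  rw [e1, e2]
  exact l2_opNorm_mono_psd hA hBA

end AuxNormMono

/-- **Monotonicity of the covariance-update operator**: `0 ⪯ 𝒞(Q) ⪯ Q`, hence
`|𝒞(Q)| ≤ |Q|`. -/
theorem cov_update_psd (d k : ℕ) (Q : Matrix (Fin d) (Fin d) ℝ) (hQ : Q.PosSemidef)
    (Γ : Matrix (Fin k) (Fin k) ℝ) (hΓ : Γ.PosDef) (H : Matrix (Fin k) (Fin d) ℝ) :
    (covUpdate H Γ Q).PosSemidef ∧ (Q - covUpdate H Γ Q).PosSemidef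
      ∧ opNorm (covUpdate H Γ Q) ≤ opNorm Q := by
  classical
  have hQT : Qᵀ = Q := by
    rw [← Matrix.conjTranspose_eq_transpose_of_trivial]; exact hQ.1
  have hHQHt : (H * Q * Hᵀ).PosSemidef := by
    have := hQ.mul_mul_conjTranspose_same H
    rwa [Matrix.conjTranspose_eq_transpose_of_trivial] at this
  set S : Matrix (Fin k) (Fin k) ℝ := H * Q * Hᵀ + Γ with hSdef
  have hS : S.PosDef := Matrix.PosDef.posSemidef_add hHQHt hΓ
  have hST : Sᵀ = S := by
    rw [← Matrix.conjTranspose_eq_transpose_of_trivial]; exact hS.isHermitian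
  have hSinv : S⁻¹ * S = 1 :=
    Matrix.nonsing_inv_mul S ((Matrix.isUnit_iff_isUnit_det S).mp hS.isUnit)
  set K : Matrix (Fin d) (Fin k) ℝ := kGain H Γ Q with hKdef
  have hK : K = Q * Hᵀ * S⁻¹ := rfl
  have hKS : K * S = Q * Hᵀ := by
    rw [hK, Matrix.mul_assoc (Q * Hᵀ) S⁻¹ S, hSinv, Matrix.mul_one]
  have hcov : covUpdate H Γ Q = (1 - K * H) * Q := rfl
  have h1 : (1 - K * H) * Q * Hᵀ = K * Γ := by
    have e : (1 - K * H) * Q * Hᵀ = Q * Hᵀ - K * (H * Q * Hᵀ) := by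
      simp only [Matrix.sub_mul, Matrix.one_mul, Matrix.mul_assoc]
    rw [e, ← hKS, hSdef, Matrix.mul_add]
    abel
  have joseph : covUpdate H Γ Q = (1 - K * H) * Q * (1 - K * H)ᴴ + K * Γ * Kᴴ := by
    rw [Matrix.conjTranspose_eq_transpose_of_trivial, Matrix.conjTranspose_eq_transpose_of_trivial,
      Matrix.transpose_sub, Matrix.transpose_one, Matrix.transpose_mul]
    calc covUpdate H Γ Q
        = (1 - K * H) * Q - K * Γ * Kᵀ + K * Γ * Kᵀ := by rw [sub_add_cancel, hcov]
      _ = (1 - K * H) * Q - (1 - K * H) * Q * Hᵀ * Kᵀ + K * Γ * Kᵀ := by rw [h1]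
      _ = (1 - K * H) * Q * (1 - Hᵀ * Kᵀ) + K * Γ * Kᵀ := by
          rw [Matrix.mul_sub, Matrix.mul_one, Matrix.mul_assoc ((1 - K * H) * Q) Hᵀ Kᵀ]
  have hC1 : (covUpdate H Γ Q).PosSemidef := by
    rw [joseph]
    exact (hQ.mul_mul_conjTranspose_same _).add (hΓ.posSemidef.mul_mul_conjTranspose_same _)
  have hdiff : Q - covUpdate H Γ Q = (H * Q)ᴴ * S⁻¹ * (H * Q) := by
    have e : (1 - K * H) * Q = Q - K * (H * Q) := by
      simp only [Matrix.sub_mul, Matrix.one_mul, Matrix.mul_assoc]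
    rw [hcov, e, sub_sub_cancel, hK, Matrix.conjTranspose_mul, hQ.1,
      Matrix.conjTranspose_eq_transpose_of_trivial]
  have hC2 : (Q - covUpdate H Γ Q).PosSemidef := by
    rw [hdiff]
    exact hS.inv.posSemidef.conjTranspose_mul_mul_same (H * Q)
  exact ⟨hC1, hC2, opNorm_mono_psd hC1 hC2⟩

end
end
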